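/- (Cumulative distribution formula for q = 1; Theorem 4.2, first part) For every parameter tuple (n,m,k,l) as in the context and every x ∈ {0,1,…,m}, one has Σ_{u=0}^{x} p(u) = C(n−k,m−l) · (C(n,x)/C(n,m)) · Σ_{r=0}^{min(x,M,N)} [(−x)_r (x−n)_r (−M)_r (−N)_r] / [r!·(−m)_r·(m−n)_r·(−M−N)_r], the finite sum being the terminating hypergeometric series ₄F₃(−x, x−n, −M, −N; −m, m−n, −M−N; 1). -/
import Mathlib


open Finset

/-- The raising factorial `(a)_r = a(a+1)⋯(a+r-1)`, as a rational number. -/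
def raise (a : ℤ) (r : ℕ) : ℚ := ∏ i ∈ Finset.range r, ((a : ℚ) + i)

/-- The `r`-th term of the terminating balanced `₄F₃`-series with numerator parameters
`a, b, -M, -N` and denominator parameters `-m, m-n, -M-N`, evaluated at `1`. -/
def hgTerm (n m M N : ℕ) (a b : ℤ) (r : ℕ) : ℚ :=
  (raise a r * raise b r * raise (-(M : ℤ)) r * raise (-(N : ℤ)) r) /
    ((Nat.factorial r : ℚ) * raise (-(m : ℤ)) r * raise ((m : ℤ) - n) r *
      raise (-(M : ℤ) - N) r)

/-- The `q → 1` limit function `p(x) = p(x | n,m,k,l)` of (4.1), with `M = m - l` and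
`N = n - m - k + l`: a Racah polynomial value times a positive factor. -/
def pone (n m k l x : ℕ) : ℚ :=
  (Nat.choose (n - k) (m - l) : ℚ) * ((Nat.choose n x : ℚ) / (Nat.choose n m : ℚ)) *
    (((n : ℚ) - 2 * x + 1) / ((n : ℚ) - x + 1)) *
    ∑ r ∈ Finset.range (min x (min (m - l) (n + l - m - k)) + 1),
      hgTerm n m (m - l) (n + l - m - k) (-(x : ℤ)) ((x : ℤ) - n - 1) r

lemma raise_zero' (a : ℤ) : raise a 0 = 1 := by simp [raise]

lemma raise_succ (a : ℤ) (r : ℕ) : raise a (r+1) = raise a r * ((a:ℚ) + r) := by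
  unfold raise; rw [Finset.prod_range_succ]

lemma raise_succ' (a : ℤ) (r : ℕ) : raise a (r+1) = (a:ℚ) * raise (a+1) r := by
  unfold raise
  rw [Finset.prod_range_succ']
  rw [mul_comm]
  congr 1
  · push_cast; ring
  · exact Finset.prod_congr rfl (fun i _ => by push_cast; ring)

lemma raise_shift (a : ℤ) (r : ℕ) :
    raise a r * ((a:ℚ) + r) = (a:ℚ) * raise (a+1) r := by
  rw [← raise_succ, raise_succ']

lemma raise_neg_zero (j r : ℕ) (h : j < r) : raise (-(j:ℤ)) r = 0 := by
  apply Finset.prod_eq_zero (Finset.mem_range.mpr h)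
  push_cast; ring

lemma hgTerm_eq_mul (n m M N : ℕ) (a b : ℤ) (r : ℕ) :
    hgTerm n m M N a b r = (raise a r * raise b r) *
      ((raise (-(M : ℤ)) r * raise (-(N : ℤ)) r) /
        ((Nat.factorial r : ℚ) * raise (-(m : ℤ)) r * raise ((m : ℤ) - n) r *
          raise (-(M : ℤ) - N) r)) := by
  unfold hgTerm; ring

lemma hgTerm_zero_of (n m M N x : ℕ) (b : ℤ) (r : ℕ)
    (h : x < r ∨ M < r ∨ N < r) :
    hgTerm n m M N (-(x:ℤ)) b r = 0 := by
  unfold hgTerm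
  rcases h with h | h | h
  · rw [raise_neg_zero x r h]; simp
  · rw [raise_neg_zero M r h]; simp
  · rw [raise_neg_zero N r h]; simp

lemma hg_sum_ext (n m M N x mm : ℕ) (b : ℤ) (hx : x ≤ mm) :
    ∑ r ∈ Finset.range (min x (min M N) + 1), hgTerm n m M N (-(x:ℤ)) b r
      = ∑ r ∈ Finset.range (mm + 1), hgTerm n m M N (-(x:ℤ)) b r := by
  apply Finset.sum_subset
  · apply Finset.range_subset_range.mpr
    have : min x (min M N) ≤ x := min_le_left _ _
    omega
  · intro r hr hnr
    simp only [Finset.mem_range] at hr hnr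
    apply hgTerm_zero_of
    have h2 : min x (min M N) < r := by omega
    rcases min_lt_iff.mp h2 with h3 | h3
    · exact Or.inl h3
    · rcases min_lt_iff.mp h3 with h4 | h4
      · exact Or.inr (Or.inl h4)
      · exact Or.inr (Or.inr h4)

lemma step_term (n m M N x r : ℕ) (hx : x + 1 ≤ m) (h2m : 2*m ≤ n) :
    (n.choose (x+1) : ℚ) * hgTerm n m M N (-((x:ℤ)+1)) (((x:ℤ)+1) - n) r
      = (n.choose x : ℚ) * hgTerm n m M N (-(x:ℤ)) ((x:ℤ) - n) r
      + (n.choose (x+1) : ℚ) * (((n:ℚ) - 2*((x:ℚ)+1) + 1)/((n:ℚ) - ((x:ℚ)+1) + 1)) *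
          hgTerm n m M N (-((x:ℤ)+1)) (((x:ℤ)+1) - n - 1) r := by
  have hxn : (x : ℕ) < n := by omega
  have hxnQ : (x:ℚ) < n := by exact_mod_cast hxn
  have hne : (n:ℚ) - ((x:ℚ)+1) + 1 ≠ 0 := by
    intro h; apply (sub_ne_zero.mpr (ne_of_gt hxnQ)); linarith
  rw [show ((x:ℤ)+1) - n - 1 = (x:ℤ) - n by ring]
  rw [show -((x:ℤ)+1) = -1 - (x:ℤ) by ring]
  rw [hgTerm_eq_mul, hgTerm_eq_mul, hgTerm_eq_mul]
  generalize (raise (-(M : ℤ)) r * raise (-(N : ℤ)) r) /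
        ((Nat.factorial r : ℚ) * raise (-(m : ℤ)) r * raise ((m : ℤ) - n) r *
          raise (-(M : ℤ) - N) r) = K
  have h1 : raise (-(x:ℤ)) r * ((x:ℚ)+1) = raise (-1 - (x:ℤ)) r * ((x:ℚ)+1-r) := by
    have hA := raise_shift (-1 - (x:ℤ)) r
    rw [show -1 - (x:ℤ)+1 = -(x:ℤ) by ring] at hA
    push_cast at hA
    linear_combination hA
  have h2 : raise (((x:ℤ)+1) - n) r * ((x:ℚ)-n) = raise ((x:ℤ)-n) r * ((x:ℚ)-n+r) := by
    have hB := raise_shift ((x:ℤ) - n) r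
    rw [show (x:ℤ) - n + 1 = ((x:ℤ)+1) - n by ring] at hB
    push_cast at hB
    linear_combination -hB
  have h3 : ((n.choose (x+1) : ℚ)) * ((x:ℚ)+1) = (n.choose x : ℚ) * ((n:ℚ) - x) := by
    have := Nat.choose_succ_right_eq n x
    have hcast : ((n.choose (x+1) * (x+1) : ℕ) : ℚ) = ((n.choose x * (n - x) : ℕ) : ℚ) := by
      exact_mod_cast congrArg (Nat.cast : ℕ → ℚ) this
    push_cast [Nat.cast_sub (le_of_lt hxn)] at hcast
    linarith [hcast]
  field_simp
  linear_combination K * ((-(n.choose (x+1) : ℚ) * raise (-1 - (x:ℤ)) r) * h2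
    + (raise (-(x:ℤ)) r * raise ((x:ℤ)-n) r) * h3
    - ((n.choose (x+1) : ℚ) * raise ((x:ℤ)-n) r) * h1)

/-- **Theorem 4.2, first part (cumulative distribution formula for `q = 1`).**
`Σ_{u=0}^{x} p(u) = C(n-k,m-l) (C(n,x)/C(n,m)) ₄F₃(-x,x-n,-M,-N;-m,m-n,-M-N;1)`. -/
theorem cdf_formula_q_one
    (n m k l x : ℕ) (hm : m ≤ n / 2) (hk : k ≤ n)
    (hl : m + k ≤ n + l) (hlm : l ≤ m) (hlk : l ≤ k) (hx : x ≤ m) :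
    ∑ u ∈ Finset.range (x + 1), pone n m k l u =
      (Nat.choose (n - k) (m - l) : ℚ) * ((Nat.choose n x : ℚ) / (Nat.choose n m : ℚ)) *
        ∑ r ∈ Finset.range (min x (min (m - l) (n + l - m - k)) + 1),
          hgTerm n m (m - l) (n + l - m - k) (-(x : ℤ)) ((x : ℤ) - n) r := by
  have h2m : 2 * m ≤ n := by omega
  induction x with
  | zero =>
    simp only [Finset.sum_range_one, pone, Nat.zero_min, hgTerm]
    norm_num [raise]
    rw [div_self (by linarith [Nat.cast_nonneg (α := ℚ) n] : (n:ℚ) + 1 ≠ 0)]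
    ring
  | succ x IH =>
    have hx' : x ≤ m := by omega
    rw [Finset.sum_range_succ, IH hx']
    unfold pone
    rw [hg_sum_ext n m (m-l) (n+l-m-k) x m _ hx']
    rw [hg_sum_ext n m (m-l) (n+l-m-k) (x+1) m _ (by omega)]
    rw [hg_sum_ext n m (m-l) (n+l-m-k) (x+1) m _ (by omega)]
    have hsum : (Nat.choose n (x+1) : ℚ) *
          ∑ r ∈ Finset.range (m+1),
            hgTerm n m (m-l) (n+l-m-k) (-((x+1 : ℕ):ℤ)) (((x+1:ℕ):ℤ) - n) r
        = (Nat.choose n x : ℚ) *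
            (∑ r ∈ Finset.range (m+1),
              hgTerm n m (m-l) (n+l-m-k) (-(x:ℤ)) ((x:ℤ) - n) r)
          + (Nat.choose n (x+1) : ℚ) *
              (((n:ℚ) - 2*((x:ℚ)+1) + 1)/((n:ℚ) - ((x:ℚ)+1) + 1)) *
              (∑ r ∈ Finset.range (m+1),
                hgTerm n m (m-l) (n+l-m-k) (-((x+1:ℕ):ℤ)) (((x+1:ℕ):ℤ) - n - 1) r) := by
      rw [Finset.mul_sum, Finset.mul_sum, Finset.mul_sum, ← Finset.sum_add_distrib]
      refine Finset.sum_congr rfl fun r hr => ?_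
      push_cast
      exact step_term n m (m-l) (n+l-m-k) x r hx h2m
    push_cast at hsum ⊢
    linear_combination (-(Nat.choose (n-k) (m-l) : ℚ) * ((Nat.choose n m : ℚ))⁻¹) * hsum
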